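/- Let f : ℝ → ℝ be continuous with f(x+1) = f(x) + d for all x ∈ ℝ, d an integer, and let y ∈ ℝ. Suppose the fiber F = {x ∈ [0,1) : f(x) − y ∈ ℤ} is finite and that f is differentiable at each point x ∈ F with deriv f x ≠ 0. Then the cardinality of F is at least |d| (the absolute value of d). -/

import Mathlib

lemma aux_card_ivt (f : ℝ → ℝ) (n : ℕ) (hf : Continuous f)
    (h1 : f 1 = f 0 + n) (y : ℝ)
    (hF : {x | x ∈ Set.Ico (0 : ℝ) 1 ∧ ∃ k : ℤ, f x - y = k}.Finite) :
    n ≤ hF.toFinset.card := by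
  have key : ∀ j : ℕ, ∃ x : ℝ, j < n →
      x ∈ {x | x ∈ Set.Ico (0 : ℝ) 1 ∧ ∃ k : ℤ, f x - y = k} ∧
        f x = y + ((⌈f 0 - y⌉ : ℝ) + j) := by
    intro j
    by_cases hj : j < n
    · have hc1 : f 0 - y ≤ (⌈f 0 - y⌉ : ℝ) := Int.le_ceil _
      have hc2 : (⌈f 0 - y⌉ : ℝ) < f 0 - y + 1 := Int.ceil_lt_add_one _
      have hjn : (j : ℝ) + 1 ≤ (n : ℝ) := by exact_mod_cast hj
      have hmem : y + ((⌈f 0 - y⌉ : ℝ) + j) ∈ Set.Icc (f 0) (f 1) := by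
        constructor
        · have : (0:ℝ) ≤ j := Nat.cast_nonneg j
          linarith
        · rw [h1]; linarith
      have hlt : y + ((⌈f 0 - y⌉ : ℝ) + j) < f 1 := by rw [h1]; linarith
      obtain ⟨x, hx, hfx⟩ :=
        intermediate_value_Icc (zero_le_one) hf.continuousOn hmem
      refine ⟨x, fun _ => ⟨⟨⟨hx.1, lt_of_le_of_ne hx.2 ?_⟩, ⟨⌈f 0 - y⌉ + j, by
        rw [hfx]; push_cast; ring⟩⟩, hfx⟩⟩
      intro hx1
      rw [hx1] at hfx
      exact absurd hfx (ne_of_gt hlt)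
    · exact ⟨0, fun h => absurd h hj⟩
  choose g hg using key
  have hcard : (Finset.range n).card ≤ hF.toFinset.card := by
    apply Finset.card_le_card_of_injOn g
    · intro j hj
      rw [Finset.mem_coe, Set.Finite.mem_toFinset]
      exact (hg j (Finset.mem_range.mp hj)).1
    · intro i hi j hj hij
      have hi' := (hg i (Finset.mem_range.mp (Finset.mem_coe.mp hi))).2
      have hj' := (hg j (Finset.mem_range.mp (Finset.mem_coe.mp hj))).2
      rw [hij] at hi'
      have : (i : ℝ) = (j : ℝ) := by linarith [hi'.symm.trans hj']
      exact_mod_cast this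
  simpa using hcard



/-- Let `f : ℝ → ℝ` be continuous with `f (x+1) = f x + d` for all
`x`, `d` an integer, and `y : ℝ`. If the fiber `F = {x ∈ [0,1) : f x - y ∈ ℤ}`
is finite and `f` is differentiable with nonvanishing derivative at each point
of `F`, then the cardinality of `F` is at least `|d|`. -/
theorem card_regular_fiber_ge_natAbs_degree (f : ℝ → ℝ) (d : ℤ)
    (hf : Continuous f) (hper : ∀ x, f (x + 1) = f x + d) (y : ℝ)
    (hF : {x | x ∈ Set.Ico (0 : ℝ) 1 ∧ ∃ k : ℤ, f x - y = k}.Finite)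
    (hreg : ∀ x ∈ {x | x ∈ Set.Ico (0 : ℝ) 1 ∧ ∃ k : ℤ, f x - y = k},
      DifferentiableAt ℝ f x ∧ deriv f x ≠ 0) :
    d.natAbs ≤ hF.toFinset.card := by
  have hf1 : f 1 = f 0 + d := by simpa using hper 0
  rcases le_or_gt 0 d with hd | hd
  · have h1 : f 1 = f 0 + (d.natAbs : ℕ) := by
      rw [hf1]
      congr 1
      rw [Nat.cast_natAbs]
      push_cast
      rw [abs_of_nonneg (by exact_mod_cast hd)]
    exact aux_card_ivt f d.natAbs hf h1 y hF
  · set S' : Set ℝ := {x | x ∈ Set.Ico (0 : ℝ) 1 ∧ ∃ k : ℤ, (-f x) - (-y) = k}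
    have hset : S' = {x | x ∈ Set.Ico (0 : ℝ) 1 ∧ ∃ k : ℤ, f x - y = k} := by
      ext x
      constructor
      · rintro ⟨h1, k, hk⟩
        exact ⟨h1, -k, by push_cast; linarith⟩
      · rintro ⟨h1, k, hk⟩
        exact ⟨h1, -k, by push_cast; linarith⟩
    have hF' : S'.Finite := by rw [hset]; exact hF
    have h1 : (fun x => -f x) 1 = (fun x => -f x) 0 + (d.natAbs : ℕ) := by
      simp only
      rw [hf1]
      have : ((d.natAbs : ℕ) : ℝ) = -(d : ℝ) := by
        rw [Nat.cast_natAbs]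
        push_cast
        rw [abs_of_neg (by exact_mod_cast hd)]
      rw [this]; ring
    have := aux_card_ivt (fun x => -f x) d.natAbs hf.neg h1 (-y) hF'
    have heq : hF'.toFinset = hF.toFinset := by
      ext x
      simp only [Set.Finite.mem_toFinset]
      rw [hset]
    rwa [heq] at this
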